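/- Let X be a real Banach space, let A, B : X →L[ℝ] X be bounded linear operators that commute (A ∘ B = B ∘ A), and let τ > 0. Then τ·φ₁(τ·(A+B)) − τ·exp((τ/2)·A) ∘ φ₁(τ·B) = ∫_{s∈[0,τ]} ∫_{σ∈[s,τ/2]} exp((τ−s)·B) ∘ exp((τ−σ)·A) ∘ A dσ ds, where the inner integral over σ from s to τ/2 is an oriented (interval) integral. -/

import Mathlib

open MeasureTheory intervalIntegral
open scoped Nat

/-- The operator `φ_ℓ(T) = ∑_{k=0}^∞ T^k / (ℓ+k)!` (for `ℓ = 0` this is `exp T`). -/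
noncomputable def phi {X : Type*} [NormedAddCommGroup X] [NormedSpace ℝ X] [CompleteSpace X]
    (ℓ : ℕ) (T : X →L[ℝ] X) : X →L[ℝ] X :=
  ∑' k : ℕ, (((ℓ + k)! : ℝ)⁻¹) • T ^ k

set_option maxHeartbeats 1000000
set_option synthInstance.maxHeartbeats 400000

private lemma phi_integral {X : Type*} [NormedAddCommGroup X] [NormedSpace ℝ X]
    [CompleteSpace X] (T : X →L[ℝ] X) {τ : ℝ} (hτ : 0 ≤ τ) :
    ∫ s in (0:ℝ)..τ, NormedSpace.exp (s • T) = τ • phi 1 (τ • T) := by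
  have hexp : ∀ s : ℝ, NormedSpace.exp (s • T)
      = ∑' k : ℕ, (((k)! : ℝ)⁻¹ * s ^ k) • T ^ k := by
    intro s
    rw [NormedSpace.exp_eq_tsum (𝕂 := ℝ)]
    exact tsum_congr fun k => by rw [smul_pow, smul_smul]
  have hint : ∀ k : ℕ, Integrable (fun s : ℝ => (((k)! : ℝ)⁻¹ * s ^ k) • T ^ k)
      (volume.restrict (Set.Ioc (0:ℝ) τ)) := by
    intro k
    have hc : Continuous fun s : ℝ => (((k)! : ℝ)⁻¹ * s ^ k) • T ^ k :=
      (continuous_const.mul (continuous_pow k)).smul continuous_const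
    exact hc.integrableOn_Ioc
  have hsum : Summable fun k : ℕ =>
      ∫ s in Set.Ioc (0:ℝ) τ, ‖(((k)! : ℝ)⁻¹ * s ^ k) • T ^ k‖ := by
    have hS : Summable fun k : ℕ => τ * (((k)! : ℝ)⁻¹ * τ ^ k * ‖T ^ k‖) := by
      refine ((NormedSpace.norm_expSeries_summable' (𝕂 := ℝ) (τ • T)).mul_left τ).congr
        fun k => ?_
      rw [smul_pow τ T k, norm_smul ((k ! : ℝ)⁻¹) (τ ^ k • T ^ k),
        norm_smul (τ ^ k) (T ^ k), Real.norm_eq_abs, Real.norm_eq_abs,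
        abs_of_nonneg (by positivity), abs_of_nonneg (pow_nonneg hτ k)]
      ring
    refine Summable.of_nonneg_of_le (fun k => integral_nonneg fun s => norm_nonneg _)
      (fun k => ?_) hS
    calc ∫ s in Set.Ioc (0:ℝ) τ, ‖(((k)! : ℝ)⁻¹ * s ^ k) • T ^ k‖
        ≤ ∫ _s in Set.Ioc (0:ℝ) τ, ((k)! : ℝ)⁻¹ * τ ^ k * ‖T ^ k‖ := by
          refine setIntegral_mono_on ((hint k).norm) (integrableOn_const ?_)
            measurableSet_Ioc (fun s hs => ?_)
          · simp [Real.volume_Ioc]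
          · rw [norm_smul (((k)! : ℝ)⁻¹ * s ^ k) (T ^ k), Real.norm_eq_abs,
              abs_of_nonneg (mul_nonneg (by positivity) (pow_nonneg hs.1.le k))]
            have h2 : s ^ k ≤ τ ^ k := pow_le_pow_left₀ hs.1.le hs.2 k
            gcongr
      _ = τ * (((k)! : ℝ)⁻¹ * τ ^ k * ‖T ^ k‖) := by
          rw [setIntegral_const, Real.volume_real_Ioc_of_le hτ, smul_eq_mul,
            sub_zero]
  rw [intervalIntegral.integral_of_le hτ]
  simp_rw [hexp]
  rw [← MeasureTheory.integral_tsum_of_summable_integral_norm hint hsum]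
  rw [phi, ← tsum_const_smul'' τ]
  refine tsum_congr fun k => ?_
  rw [_root_.integral_smul_const, smul_pow τ T k, smul_smul, smul_smul]
  congr 1
  rw [← intervalIntegral.integral_of_le hτ, intervalIntegral.integral_const_mul,
    integral_pow]
  have hk : ((k)! : ℝ) ≠ 0 := Nat.cast_ne_zero.2 (Nat.factorial_ne_zero k)
  have hk1 : ((1 + k)! : ℝ) = (k + 1) * (k)! := by
    rw [add_comm 1 k]
    push_cast [Nat.factorial_succ]
    ring
  rw [hk1]
  have hk2 : (k : ℝ) + 1 ≠ 0 := by positivity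
  field_simp
  ring

theorem stmt6 {X : Type*} [NormedAddCommGroup X] [NormedSpace ℝ X] [CompleteSpace X]
    (A B : X →L[ℝ] X) (hcomm : A.comp B = B.comp A) (τ : ℝ) (hτ : 0 < τ) :
    τ • phi 1 (τ • (A + B)) - τ • (NormedSpace.exp ((τ/2) • A)).comp (phi 1 (τ • B)) =
      ∫ s in (0:ℝ)..τ, ∫ σ in s..(τ/2),
        (NormedSpace.exp ((τ - s) • B)).comp
          ((NormedSpace.exp ((τ - σ) • A)).comp A) := by
  let +nondep : NormedAlgebra ℚ (X →L[ℝ] X) := .restrictScalars ℚ ℝ (X →L[ℝ] X)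
  have hAB : Commute A B := hcomm
  have hconta : Continuous fun σ : ℝ => NormedSpace.exp ((τ - σ) • A) * A :=
    (NormedSpace.exp_continuous.comp
      ((continuous_const.sub continuous_id).smul continuous_const)).mul continuous_const
  have inner : ∀ s : ℝ,
      (∫ σ in s..(τ/2), (NormedSpace.exp ((τ - s) • B)).comp
          ((NormedSpace.exp ((τ - σ) • A)).comp A))
        = NormedSpace.exp ((τ - s) • B) *
            (NormedSpace.exp ((τ - s) • A) - NormedSpace.exp ((τ/2) • A)) := by
    intro s
    have hderiv : ∀ σ ∈ Set.uIcc s (τ/2),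
        HasDerivAt (fun u : ℝ => -NormedSpace.exp ((τ - u) • A))
        (NormedSpace.exp ((τ - σ) • A) * A) σ := by
      intro σ _
      have h1 := hasDerivAt_exp_smul_const (𝕂 := ℝ) A (τ - σ)
      have h2 : HasDerivAt (fun u : ℝ => τ - u) (-1) σ := by
        simpa using (hasDerivAt_id σ).const_sub τ
      have h3 := (h1.scomp σ h2).neg
      simp [Function.comp_def] at h3
      exact h3
    have hA : (∫ σ in s..(τ/2), NormedSpace.exp ((τ - σ) • A) * A)
        = NormedSpace.exp ((τ - s) • A) - NormedSpace.exp ((τ/2) • A) := by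
      rw [intervalIntegral.integral_eq_sub_of_hasDerivAt hderiv
        (hconta.intervalIntegrable _ _)]
      have h5 : τ - τ/2 = τ/2 := by ring
      rw [h5]
      abel
    calc (∫ σ in s..(τ/2), (NormedSpace.exp ((τ - s) • B)).comp
          ((NormedSpace.exp ((τ - σ) • A)).comp A))
        = ∫ σ in s..(τ/2), (ContinuousLinearMap.mul ℝ (X →L[ℝ] X)
            (NormedSpace.exp ((τ - s) • B))) (NormedSpace.exp ((τ - σ) • A) * A) := rfl
      _ = (ContinuousLinearMap.mul ℝ (X →L[ℝ] X) (NormedSpace.exp ((τ - s) • B)))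
            (∫ σ in s..(τ/2), NormedSpace.exp ((τ - σ) • A) * A) :=
          ContinuousLinearMap.intervalIntegral_comp_comm _ (hconta.intervalIntegrable _ _)
      _ = _ := by rw [hA]; rfl
  have hsplit : ∀ s : ℝ, NormedSpace.exp ((τ - s) • B) *
        (NormedSpace.exp ((τ - s) • A) - NormedSpace.exp ((τ/2) • A))
      = NormedSpace.exp ((τ - s) • (A + B))
          - NormedSpace.exp ((τ/2) • A) * NormedSpace.exp ((τ - s) • B) := by
    intro s
    have h1 : Commute ((τ - s) • A) ((τ - s) • B) := (hAB.smul_left _).smul_right _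
    have h2 : NormedSpace.exp ((τ - s) • (A + B))
        = NormedSpace.exp ((τ - s) • A) * NormedSpace.exp ((τ - s) • B) := by
      rw [smul_add]; exact NormedSpace.exp_add_of_commute h1
    have h3 : Commute (NormedSpace.exp ((τ - s) • B)) (NormedSpace.exp ((τ - s) • A)) :=
      (h1.symm.exp)
    have h4 : Commute (NormedSpace.exp ((τ - s) • B)) (NormedSpace.exp ((τ/2) • A)) :=
      (((hAB.symm.smul_left _).smul_right _).exp)
    rw [mul_sub, h2, h3.eq, h4.eq]
  simp_rw [inner, hsplit]
  have hcont1 : Continuous fun s : ℝ => NormedSpace.exp ((τ - s) • (A + B)) :=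
    NormedSpace.exp_continuous.comp ((continuous_const.sub continuous_id).smul continuous_const)
  have hcont2 : Continuous fun s : ℝ => NormedSpace.exp ((τ - s) • B) :=
    NormedSpace.exp_continuous.comp ((continuous_const.sub continuous_id).smul continuous_const)
  rw [intervalIntegral.integral_sub
    (g := fun s : ℝ => NormedSpace.exp ((τ/2) • A) * NormedSpace.exp ((τ - s) • B))
    (hcont1.intervalIntegrable _ _)
    ((continuous_const.mul hcont2).intervalIntegrable _ _)]
  have e1 : (∫ s in (0:ℝ)..τ, NormedSpace.exp ((τ - s) • (A + B)))
      = τ • phi 1 (τ • (A + B)) := by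
    have h := intervalIntegral.integral_comp_sub_left
      (a := (0:ℝ)) (b := τ) (fun u : ℝ => NormedSpace.exp (u • (A + B))) τ
    simp only [sub_zero, sub_self] at h
    rw [h, phi_integral _ hτ.le]
  have e2 : (∫ s in (0:ℝ)..τ, NormedSpace.exp ((τ/2) • A) * NormedSpace.exp ((τ - s) • B))
      = NormedSpace.exp ((τ/2) • A) * (τ • phi 1 (τ • B)) := by
    calc (∫ s in (0:ℝ)..τ, NormedSpace.exp ((τ/2) • A) * NormedSpace.exp ((τ - s) • B))
        = ∫ s in (0:ℝ)..τ, (ContinuousLinearMap.mul ℝ (X →L[ℝ] X)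
            (NormedSpace.exp ((τ/2) • A))) (NormedSpace.exp ((τ - s) • B)) := rfl
      _ = (ContinuousLinearMap.mul ℝ (X →L[ℝ] X) (NormedSpace.exp ((τ/2) • A)))
            (∫ s in (0:ℝ)..τ, NormedSpace.exp ((τ - s) • B)) :=
          ContinuousLinearMap.intervalIntegral_comp_comm _ (hcont2.intervalIntegrable _ _)
      _ = _ := by
          have h := intervalIntegral.integral_comp_sub_left
            (a := (0:ℝ)) (b := τ) (fun u : ℝ => NormedSpace.exp (u • B)) τ
          simp only [sub_zero, sub_self] at h
          rw [h, phi_integral _ hτ.le]; rfl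
  rw [e1, e2, mul_smul_comm]
  rfl
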